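/- Let θ ∈ ℝ with θ/(2π) irrational, and define u_n = 1 − n + n·cos(nθ). Then u_n > 0 for infinitely many n ∈ ℕ. -/

import Mathlib

open Real Set

lemma fiber_finite (ξ : ℝ) (d : ℕ) :
    {q : ℚ | |ξ - (q:ℝ)| < 1 ∧ q.den = d}.Finite := by
  have hinj : InjOn Rat.num {q : ℚ | |ξ - (q:ℝ)| < 1 ∧ q.den = d} := by
    intro a ha b hb h
    exact Rat.ext h (ha.2.trans hb.2.symm)
  refine Set.Finite.of_finite_image ?_ hinj
  refine (Set.finite_Icc ⌈(ξ - 1) * d⌉ ⌊(ξ + 1) * d⌋).subset ?_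
  rintro m ⟨q, ⟨hq1, hq2⟩, rfl⟩
  have hd : (0:ℝ) < d := by
    have := q.pos
    rw [hq2] at this
    exact_mod_cast this
  have hq : ((q.num : ℝ)) = (q:ℝ) * d := by
    rw [← hq2]
    push_cast [Rat.cast_def]
    field_simp
  have h1 : ξ - 1 < (q:ℝ) := by
    have := abs_lt.mp hq1; linarith [this.1, this.2]
  have h2 : (q:ℝ) < ξ + 1 := by
    have := abs_lt.mp hq1; linarith [this.1, this.2]
  constructor
  · rw [Int.ceil_le]
    rw [hq]
    exact mul_le_mul_of_nonneg_right h1.le hd.le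
  · rw [Int.le_floor]
    rw [hq]
    exact mul_le_mul_of_nonneg_right h2.le hd.le

/-- For `θ/(2π)` irrational, `u_n = 1 - n + n·cos(nθ)` is positive infinitely often. -/
theorem counterexample_pos_infinitely_often (θ : ℝ) (hθ : Irrational (θ / (2 * Real.pi))) :
    {n : ℕ | 0 < 1 - (n : ℝ) + (n : ℝ) * Real.cos (n * θ)}.Infinite := by
  set ξ := θ / (2 * Real.pi) with hξdef
  have hπ : (0:ℝ) < Real.pi := Real.pi_pos
  have hθeq : θ = 2 * Real.pi * ξ := by rw [hξdef]; field_simp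
  have hQ := Real.infinite_rat_abs_sub_lt_one_div_den_sq_of_irrational hθ
  -- show: for every N there is n > N in the set
  apply Set.infinite_of_not_bddAbove
  rintro ⟨N, hN⟩
  -- all q in Q have den ≤ max N 20, contradiction with finiteness
  have key : ∀ q : ℚ, |ξ - (q:ℝ)| < 1 / (q.den:ℝ)^2 → q.den ≤ max N 20 := by
    intro q hq
    by_contra hden
    push_neg at hden
    set n : ℕ := q.den with hn
    have hn20 : 20 < n := lt_of_le_of_lt (le_max_right _ _) hden
    have hnN : N < n := lt_of_le_of_lt (le_max_left _ _) hden
    have hnpos : (0:ℝ) < n := by positivity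
    -- show n ∈ S
    have hmem : n ∈ {n : ℕ | 0 < 1 - (n : ℝ) + (n : ℝ) * Real.cos (n * θ)} := by
      have hqnum : ((q:ℝ)) * n = q.num := by
        rw [hn]; push_cast [Rat.cast_def]; field_simp
      set x : ℝ := 2 * Real.pi * n * (ξ - q) with hx
      have hcos : Real.cos (n * θ) = Real.cos x := by
        have : (n:ℝ) * θ = x + q.num * (2 * Real.pi) := by
          rw [hθeq, hx]; ring_nf; rw [← hqnum]; ring
        rw [this, Real.cos_add_int_mul_two_pi]
      have hxbound : |x| < 2 * Real.pi / n := by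
        rw [hx]
        rw [abs_mul]
        have h2 : |2 * Real.pi * (n:ℝ)| = 2 * Real.pi * n := abs_of_pos (by positivity)
        rw [h2]
        calc 2 * Real.pi * n * |ξ - q| < 2 * Real.pi * n * (1 / (n:ℝ)^2) := by
              apply mul_lt_mul_of_pos_left hq (by positivity)
          _ = 2 * Real.pi / n := by field_simp
      have hcosge : 1 - x^2/2 ≤ Real.cos x := Real.one_sub_sq_div_two_le_cos
      have hx2 : x^2 < (2 * Real.pi / n)^2 := by
        have := sq_abs x
        nlinarith [abs_nonneg x, hxbound]
      have hπlt : Real.pi < 3.15 := by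
        have := Real.pi_lt_d2; linarith
      have hfin : (n:ℝ) * (x^2/2) < 1 := by
        have h1 : (n:ℝ) * (x^2/2) < (n:ℝ) * ((2 * Real.pi / n)^2 / 2) :=
          mul_lt_mul_of_pos_left (by linarith) hnpos
        have h2 : (n:ℝ) * ((2 * Real.pi / n)^2 / 2) = 2 * Real.pi^2 / n := by
          field_simp
        have h3 : 2 * Real.pi^2 / n < 1 := by
          rw [div_lt_one hnpos]
          have : (20:ℝ) < n := by exact_mod_cast hn20
          nlinarith
        linarith
      simp only [Set.mem_setOf_eq, hcos]
      nlinarith [hcosge]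
    exact absurd (hN hmem) (not_le.mpr hnN)
  -- contradiction: Q infinite but contained in finite union
  have : {q : ℚ | |ξ - (q:ℝ)| < 1 / (q.den:ℝ)^2}.Finite := by
    apply Set.Finite.subset
      (Set.Finite.biUnion (Set.finite_Iic (max N 20))
        (fun d _ => fiber_finite ξ d))
    intro q hq
    simp only [Set.mem_iUnion, Set.mem_setOf_eq]
    refine ⟨q.den, key q hq, ?_, rfl⟩
    have hnpos : (0:ℝ) < (q.den:ℝ) := by exact_mod_cast q.pos
    calc |ξ - (q:ℝ)| < 1 / (q.den:ℝ)^2 := hq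
      _ ≤ 1 := by
          rw [div_le_one (by positivity)]
          have : (1:ℝ) ≤ (q.den:ℝ) := by exact_mod_cast q.pos
          nlinarith
  exact hQ this
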